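/- Define I2(x,y) = (1/2)·ln(x² + y²) − x²/(x² + y²). Then for every (x,y) ∈ ℝ² with (x,y) ≠ (0,0), the function I2 is differentiable at (x,y) and (∂I2/∂x)(x,y)·(−y(3x² + y²)) + (∂I2/∂y)(x,y)·(x(x² − y²)) = 0; that is, I2 is a first integral of the planar system (ẋ, ẏ) = (−y(3x² + y²), x(x² − y²)). -/

import Mathlib

/-- The first integral `I2(x,y) = (1/2)ln(x² + y²) − x²/(x² + y²)`. -/
noncomputable def I2fun : ℝ × ℝ → ℝ := fun p =>
  (1/2) * Real.log (p.1 ^ 2 + p.2 ^ 2) - p.1 ^ 2 / (p.1 ^ 2 + p.2 ^ 2)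

/-- For `(x,y) ≠ (0,0)`, `I2` is differentiable at `(x,y)` and
its derivative annihilates the vector field `(−y(3x² + y²), x(x² − y²))`,
i.e. `I2` is a first integral. -/
theorem stmt_13 (x y : ℝ) (h : (x, y) ≠ (0, 0)) :
    DifferentiableAt ℝ I2fun (x, y) ∧
    fderiv ℝ I2fun (x, y)
      (-(y * (3 * x ^ 2 + y ^ 2)), x * (x ^ 2 - y ^ 2)) = 0 := by
  have hu : x ^ 2 + y ^ 2 ≠ 0 := by
    intro hc
    apply h
    have hx : x = 0 := by nlinarith [sq_nonneg x, sq_nonneg y]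
    have hy : y = 0 := by nlinarith [sq_nonneg x, sq_nonneg y]
    simp [hx, hy]
  have hfx := (hasDerivAt_pow 2 x).comp_hasFDerivAt (x, y) (hasFDerivAt_fst : HasFDerivAt _ (ContinuousLinearMap.fst ℝ ℝ ℝ) ((x, y) : ℝ × ℝ))
  have hfy := (hasDerivAt_pow 2 y).comp_hasFDerivAt (x, y) (hasFDerivAt_snd : HasFDerivAt _ (ContinuousLinearMap.snd ℝ ℝ ℝ) ((x, y) : ℝ × ℝ))
  have h1 := hfx.add hfy
  have hlog := (Real.hasDerivAt_log hu).comp_hasFDerivAt (x, y) h1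
  have hinv := (hasDerivAt_inv hu).comp_hasFDerivAt (x, y) h1
  have hdiv := hfx.mul hinv
  have H := (hlog.const_mul (1/2 : ℝ)).sub hdiv
  have heq : I2fun = fun p : ℝ × ℝ =>
      (1/2) * Real.log (p.1 ^ 2 + p.2 ^ 2) - p.1 ^ 2 * (p.1 ^ 2 + p.2 ^ 2)⁻¹ := by
    funext p; simp [I2fun, div_eq_mul_inv]
  have H' : HasFDerivAt I2fun _ (x, y) := H.congr_of_eventuallyEq (Filter.Eventually.of_forall fun p => by rw [heq]; rfl)
  refine ⟨H'.differentiableAt, ?_⟩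
  rw [H'.fderiv]
  simp only [ContinuousLinearMap.sub_apply, ContinuousLinearMap.smul_apply,
    ContinuousLinearMap.add_apply, ContinuousLinearMap.coe_fst',
    ContinuousLinearMap.coe_snd', ContinuousLinearMap.comp_apply,
    ContinuousLinearMap.smulRight_apply, ContinuousLinearMap.one_apply,
    smul_eq_mul, Function.comp_apply, Pi.add_apply]
  field_simp
  ring
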